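/- The function a₃⁺(t) = 3(t cosh t − sinh t)/t³ (extended by 1 at t = 0) is strictly increasing on [0, ∞), satisfies a₃⁺(0) = 1, and tends to infinity as t → ∞. -/

import Mathlib

open Real Filter
open scoped Classical

private lemma pos_of_deriv (f f' : ℝ → ℝ) (hf : ∀ x, HasDerivAt f (f' x) x)
    (h0 : f 0 = 0) (hpos : ∀ x, 0 < x → 0 < f' x) : ∀ t, 0 < t → 0 < f t := by
  intro t ht
  have hmono : StrictMonoOn f (Set.Ici 0) := by
    apply strictMonoOn_of_deriv_pos (convex_Ici 0)
      (fun x _ => (hf x).continuousAt.continuousWithinAt)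
    intro x hx
    rw [interior_Ici] at hx
    rw [(hf x).deriv]
    exact hpos x hx
  have := hmono Set.self_mem_Ici (Set.mem_Ici.mpr ht.le) ht
  rwa [h0] at this

private lemma lemA : ∀ t : ℝ, 0 < t → 0 < t * Real.cosh t - Real.sinh t := by
  apply pos_of_deriv _ (fun t => t * Real.sinh t)
  · intro x
    have h : HasDerivAt (fun t : ℝ => t * Real.cosh t - Real.sinh t)
        (1 * Real.cosh x + x * Real.sinh x - Real.cosh x) x :=
      ((hasDerivAt_id x).mul (Real.hasDerivAt_cosh x)).sub (Real.hasDerivAt_sinh x)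
    convert h using 1; ring
  · simp
  · intro x hx; exact mul_pos hx (Real.sinh_pos_iff.mpr hx)

private lemma lemB : ∀ t : ℝ, 0 < t → 0 < 3 * (t * Real.cosh t - Real.sinh t) - t ^ 3 := by
  apply pos_of_deriv _ (fun t => 3 * t * (Real.sinh t - t))
  · intro x
    have h : HasDerivAt (fun t : ℝ => 3 * (t * Real.cosh t - Real.sinh t) - t ^ 3)
        (3 * (1 * Real.cosh x + x * Real.sinh x - Real.cosh x) - 3 * x ^ 2) x := by
      exact ((((hasDerivAt_id x).mul (Real.hasDerivAt_cosh x)).sub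
        (Real.hasDerivAt_sinh x)).const_mul 3).sub (hasDerivAt_pow 3 x)
    convert h using 1; ring
  · simp
  · intro x hx
    have := Real.self_lt_sinh_iff.mpr hx
    have h3 : (0:ℝ) < 3 * x := by linarith
    nlinarith

private lemma lemC : ∀ t : ℝ, 0 < t →
    0 < (t ^ 2 + 3) * Real.sinh t - 3 * (t * Real.cosh t) := by
  apply pos_of_deriv _ (fun t => t * (t * Real.cosh t - Real.sinh t))
  · intro x
    have h : HasDerivAt (fun t : ℝ => (t ^ 2 + 3) * Real.sinh t - 3 * (t * Real.cosh t))
        ((2:ℕ) * x ^ (2-1) * Real.sinh x + (x ^ 2 + 3) * Real.cosh x -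
          3 * (1 * Real.cosh x + id x * Real.sinh x)) x :=
      (((hasDerivAt_pow 2 x).add_const 3).mul (Real.hasDerivAt_sinh x)).sub
        (((hasDerivAt_id x).mul (Real.hasDerivAt_cosh x)).const_mul 3)
    convert h using 1; simp only [id_eq]; push_cast; ring
  · simp
  · intro x hx; exact mul_pos hx (lemA x hx)

private lemma hasDerivAt_g (x : ℝ) (hx : 0 < x) :
    HasDerivAt (fun t : ℝ => 3 * (t * Real.cosh t - Real.sinh t) / t ^ 3)
      ((3 * (x * Real.sinh x) * x ^ 3 -
        3 * (x * Real.cosh x - Real.sinh x) * (3 * x ^ 2)) / (x ^ 3) ^ 2) x := by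
  have hnum : HasDerivAt (fun t : ℝ => 3 * (t * Real.cosh t - Real.sinh t))
      (3 * (x * Real.sinh x)) x := by
    have h : HasDerivAt (fun t : ℝ => 3 * (t * Real.cosh t - Real.sinh t))
        (3 * (1 * Real.cosh x + id x * Real.sinh x - Real.cosh x)) x := (((hasDerivAt_id x).mul (Real.hasDerivAt_cosh x)).sub
      (Real.hasDerivAt_sinh x)).const_mul 3
    convert h using 1; simp only [id_eq]; ring
  have hden : HasDerivAt (fun t : ℝ => t ^ 3) (3 * x ^ 2) x := by
    simpa using hasDerivAt_pow 3 x
  exact hnum.div hden (by positivity)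

/-- a₃⁺(t) = 3(t cosh t − sinh t)/t³ (with a₃⁺(0)=1) is strictly increasing on
    [0,∞), equals 1 at 0, and tends to infinity as t → ∞. -/
theorem a3plus_properties
    (a : ℝ → ℝ)
    (ha : ∀ t, a t = if t = 0 then 1 else 3 * (t * Real.cosh t - Real.sinh t) / t ^ 3) :
    StrictMonoOn a (Set.Ici 0) ∧ a 0 = 1 ∧ Tendsto a atTop atTop := by
  have ha0 : a 0 = 1 := by rw [ha]; simp
  have haval : ∀ t : ℝ, 0 < t → a t = 3 * (t * Real.cosh t - Real.sinh t) / t ^ 3 := by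
    intro t ht; rw [ha, if_neg ht.ne']
  -- a t > 1 for t > 0
  have hgt1 : ∀ t : ℝ, 0 < t → 1 < a t := by
    intro t ht
    rw [haval t ht, lt_div_iff₀ (by positivity)]
    have := lemB t ht
    linarith
  -- strict mono on positives
  have hmono : ∀ s t : ℝ, 0 < s → s < t → a s < a t := by
    intro s t hs hst
    have key : StrictMonoOn a (Set.Ici s) := by
      apply strictMonoOn_of_deriv_pos (convex_Ici s)
      · apply ContinuousOn.congr (f := fun t : ℝ => 3 * (t * Real.cosh t - Real.sinh t) / t ^ 3)
        · apply ContinuousOn.div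
          · fun_prop
          · fun_prop
          · intro x hx
            have : 0 < x := lt_of_lt_of_le hs hx
            positivity
        · intro x hx
          exact haval x (lt_of_lt_of_le hs hx)
      · intro x hx
        rw [interior_Ici] at hx
        have hx0 : 0 < x := hs.trans hx
        have heq : a =ᶠ[nhds x] fun t : ℝ => 3 * (t * Real.cosh t - Real.sinh t) / t ^ 3 := by
          filter_upwards [eventually_gt_nhds hx0] with y hy using haval y hy
        rw [heq.deriv_eq, (hasDerivAt_g x hx0).deriv]
        apply div_pos _ (by positivity)
        have hC := lemC x hx0
        nlinarith [sq_nonneg x, mul_pos hx0 hx0]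
    exact key Set.self_mem_Ici (Set.mem_Ici.mpr hst.le) hst
  have hsm : StrictMonoOn a (Set.Ici 0) := by
    intro s hs t ht hst
    rcases eq_or_lt_of_le (Set.mem_Ici.mp hs) with h0 | hpos
    · rw [← h0, ha0]
      exact hgt1 t (by rw [← h0] at hst; exact hst)
    · exact hmono s t hpos hst
  refine ⟨hsm, ha0, ?_⟩
  -- tendsto atTop
  have htend : Tendsto (fun t : ℝ => 3 / 4 * (Real.exp t / t ^ 2)) atTop atTop :=
    (Real.tendsto_exp_div_pow_atTop 2).const_mul_atTop (by norm_num)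
  apply tendsto_atTop_mono' atTop _ htend
  filter_upwards [eventually_ge_atTop (2:ℝ)] with t ht
  have ht0 : (0:ℝ) < t := by linarith
  rw [haval t ht0, le_div_iff₀ (by positivity)]
  have hkey : 3 / 4 * (Real.exp t / t ^ 2) * t ^ 3 = 3 / 4 * Real.exp t * t := by
    field_simp
  rw [hkey]
  have hsc : Real.sinh t ≤ Real.cosh t := by
    rw [Real.sinh_eq, Real.cosh_eq]
    have := Real.exp_pos (-t)
    linarith
  have hec : Real.exp t / 2 ≤ Real.cosh t := by
    rw [Real.cosh_eq]
    have := Real.exp_pos (-t)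
    linarith
  have hcpos : 0 < Real.cosh t := Real.cosh_pos t
  nlinarith [mul_nonneg (by linarith : (0:ℝ) ≤ t - 2) hcpos.le,
    mul_nonneg (by linarith : (0:ℝ) ≤ t) (by linarith : 0 ≤ Real.cosh t - Real.exp t / 2)]
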